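/- There exists Θ ∈ ℝ^{T×n} with X_- Θ symmetric and the block matrix [[X_- Θ, X_+ Θ],[Θᵀ X_+ᵀ, X_- Θ]] positive definite if and only if X_- has full row rank and there exists a right inverse X_-^♯ of X_- with X_+ X_-^♯ Schur stable. In that case X_-^♯ := Θ (X_- Θ)^{-1} is such a right inverse and K := U_- Θ (X_- Θ)^{-1} satisfies X_+ X_-^♯ = (X_+Θ)(X_-Θ)^{-1}. -/

import Mathlib

open scoped Matrix
open Matrix


/-- Schur stability of a real matrix M via the discrete Lyapunov characterization:
there exists P ≻ 0 with P - M P Mᵀ ≻ 0. -/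
def SchurStableLyap {n : ℕ} (M : Matrix (Fin n) (Fin n) ℝ) : Prop :=
  ∃ P : Matrix (Fin n) (Fin n) ℝ, P.PosDef ∧ (P - M * P * Mᵀ).PosDef


-- D-block of a PD block matrix is PD
lemma aux_block_D {p q : ℕ} {A : Matrix (Fin p) (Fin p) ℝ} {B : Matrix (Fin p) (Fin q) ℝ}
    {C : Matrix (Fin q) (Fin p) ℝ} {D : Matrix (Fin q) (Fin q) ℝ}
    (h : (fromBlocks A B C D).PosDef) : D.PosDef := by
  obtain ⟨hherm, hpos⟩ := posDef_iff_dotProduct_mulVec.mp h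
  rw [isHermitian_fromBlocks_iff] at hherm
  refine posDef_iff_dotProduct_mulVec.mpr ⟨hherm.2.2.2, fun y hy => ?_⟩
  have hz : (Sum.elim (0 : Fin p → ℝ) y) ≠ 0 := by
    intro h0
    apply hy
    funext i
    exact congrFun h0 (Sum.inr i)
  have := hpos hz
  simpa [fromBlocks_mulVec, dotProduct] using this

lemma aux_schur {p q : ℕ} (A : Matrix (Fin p) (Fin p) ℝ) (B : Matrix (Fin p) (Fin q) ℝ)
    {D : Matrix (Fin q) (Fin q) ℝ} (hD : D.PosDef) :
    (fromBlocks A B Bᵀ D).PosDef ↔ (A - B * D⁻¹ * Bᵀ).PosDef := by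
  haveI := hD.isUnit.invertible
  have hBt : Bᵀ = Bᴴ := (conjTranspose_eq_transpose_of_trivial B).symm
  have hherm := IsHermitian.fromBlocks₂₂ A B hD.isHermitian
  rw [hBt]
  rw [posDef_iff_dotProduct_mulVec, posDef_iff_dotProduct_mulVec]
  constructor
  · rintro ⟨hh, hpos⟩
    refine ⟨hherm.mp hh, fun x hx => ?_⟩
    have key := schur_complement_eq₂₂ A B x (-((D⁻¹ * Bᴴ) *ᵥ x)) hD.isHermitian
    have hz : Sum.elim x (-((D⁻¹ * Bᴴ) *ᵥ x)) ≠ 0 := by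
      intro h0; apply hx; funext i; exact congrFun h0 (Sum.inl i)
    have hpos' := hpos hz
    rw [dotProduct_mulVec] at hpos' ⊢
    rw [key] at hpos'
    simpa using hpos'
  · rintro ⟨hh, hpos⟩
    refine ⟨hherm.mpr hh, fun z hz => ?_⟩
    set x := z ∘ Sum.inl
    set y := z ∘ Sum.inr
    have hzxy : z = Sum.elim x y := (Sum.elim_comp_inl_inr z).symm
    have key := schur_complement_eq₂₂ A B x y hD.isHermitian
    rw [dotProduct_mulVec, hzxy, key]
    rcases eq_or_ne x 0 with hx | hx
    · have hy : ((D⁻¹ * Bᴴ) *ᵥ x + y) ≠ 0 := by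
        simp only [hx, mulVec_zero, zero_add]
        intro h0
        apply hz
        rw [hzxy, hx, h0]
        funext i; cases i <;> simp
      have h1 := hD.dotProduct_mulVec_pos hy
      have h2 : (0:ℝ) ≤ star x ᵥ* (A - B * D⁻¹ * Bᴴ) ⬝ᵥ x := by
        rw [← dotProduct_mulVec]; exact (PosDef.posSemidef (posDef_iff_dotProduct_mulVec.mpr ⟨hh, hpos⟩)).dotProduct_mulVec_nonneg x
      rw [dotProduct_mulVec] at h1
      positivity
    · have h1 := hD.posSemidef.dotProduct_mulVec_nonneg ((D⁻¹ * Bᴴ) *ᵥ x + y)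
      have h2 : (0:ℝ) < star x ᵥ* (A - B * D⁻¹ * Bᴴ) ⬝ᵥ x := by
        rw [← dotProduct_mulVec]; exact hpos hx
      rw [dotProduct_mulVec] at h1
      positivity

lemma part2_aux (n T : ℕ) (Xm Xp : Matrix (Fin n) (Fin T) ℝ)
    (Θ : Matrix (Fin T) (Fin n) ℝ)
    (hsym : (Xm * Θ)ᵀ = Xm * Θ)
    (hpd : (fromBlocks (Xm * Θ) (Xp * Θ) (Θᵀ * Xpᵀ) (Xm * Θ)).PosDef) :
    Xm * (Θ * (Xm * Θ)⁻¹) = 1 ∧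
    SchurStableLyap (Xp * (Θ * (Xm * Θ)⁻¹)) ∧
    Xp * (Θ * (Xm * Θ)⁻¹) = (Xp * Θ) * (Xm * Θ)⁻¹ := by
  set P := Xm * Θ with hPdef
  have hlow : Θᵀ * Xpᵀ = (Xp * Θ)ᵀ := (transpose_mul _ _).symm
  rw [hlow] at hpd
  have hP : P.PosDef := aux_block_D hpd
  have hdet : IsUnit P.det := (Matrix.isUnit_iff_isUnit_det _).mp hP.isUnit
  have hSchurC := (aux_schur P (Xp * Θ) hP).mp hpd
  have hM : Xp * (Θ * P⁻¹) = (Xp * Θ) * P⁻¹ := (Matrix.mul_assoc _ _ _).symm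
  have hinvsym : (P⁻¹)ᵀ = P⁻¹ := by rw [Matrix.transpose_nonsing_inv, hsym]
  refine ⟨by rw [← Matrix.mul_assoc]; exact Matrix.mul_nonsing_inv _ hdet, ⟨P, hP, ?_⟩, hM⟩
  have h1 : Xp * (Θ * P⁻¹) * P = Xp * Θ := by
    rw [hM, Matrix.mul_assoc, Matrix.nonsing_inv_mul _ hdet, Matrix.mul_one]
  have h2 : (Xp * (Θ * P⁻¹))ᵀ = P⁻¹ * (Xp * Θ)ᵀ := by rw [hM, transpose_mul, hinvsym]
  rw [h1, h2, ← Matrix.mul_assoc]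
  exact hSchurC


/-- LMI conditions for data-driven stabilization: feasibility of the data-based LMI
in Θ is equivalent to X₋ having full row rank together with the existence of a
right inverse X₋♯ of X₋ with X₊X₋♯ Schur stable; in that case X₋♯ := Θ(X₋Θ)⁻¹ is
such a right inverse and X₊X₋♯ = (X₊Θ)(X₋Θ)⁻¹. -/
theorem lmi_conditions_for_stabilization
    (n m T : ℕ)
    (Xm Xp : Matrix (Fin n) (Fin T) ℝ) (Um : Matrix (Fin m) (Fin T) ℝ) :
    ((∃ Θ : Matrix (Fin T) (Fin n) ℝ,
        (Xm * Θ)ᵀ = Xm * Θ ∧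
        (Matrix.fromBlocks (Xm * Θ) (Xp * Θ) (Θᵀ * Xpᵀ) (Xm * Θ)).PosDef)
      ↔ (Xm.rank = n ∧ ∃ Xs : Matrix (Fin T) (Fin n) ℝ,
          Xm * Xs = 1 ∧ SchurStableLyap (Xp * Xs)))
    ∧ (∀ Θ : Matrix (Fin T) (Fin n) ℝ,
        (Xm * Θ)ᵀ = Xm * Θ →
        (Matrix.fromBlocks (Xm * Θ) (Xp * Θ) (Θᵀ * Xpᵀ) (Xm * Θ)).PosDef →
        Xm * (Θ * (Xm * Θ)⁻¹) = 1 ∧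
        SchurStableLyap (Xp * (Θ * (Xm * Θ)⁻¹)) ∧
        Xp * (Θ * (Xm * Θ)⁻¹) = (Xp * Θ) * (Xm * Θ)⁻¹) := by
  refine ⟨⟨?_, ?_⟩, fun Θ hsym hpd => part2_aux n T Xm Xp Θ hsym hpd⟩
  · rintro ⟨Θ, hsym, hpd⟩
    obtain ⟨hright, hschur, -⟩ := part2_aux n T Xm Xp Θ hsym hpd
    refine ⟨?_, Θ * (Xm * Θ)⁻¹, hright, hschur⟩
    refine le_antisymm (Xm.rank_le_card_height.trans (Fintype.card_fin n).le) ?_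
    calc n = (1 : Matrix (Fin n) (Fin n) ℝ).rank := by
              rw [Matrix.rank_one, Fintype.card_fin]
      _ = (Xm * (Θ * (Xm * Θ)⁻¹)).rank := by rw [hright]
      _ ≤ Xm.rank := Matrix.rank_mul_le_left _ _
  · rintro ⟨-, Xs, hXs, P, hP, hLyap⟩
    refine ⟨Xs * P, ?_, ?_⟩
    · have hXmΘ : Xm * (Xs * P) = P := by rw [← Matrix.mul_assoc, hXs, Matrix.one_mul]
      rw [hXmΘ, ← conjTranspose_eq_transpose_of_trivial, hP.isHermitian.eq]
    · have hXmΘ : Xm * (Xs * P) = P := by rw [← Matrix.mul_assoc, hXs, Matrix.one_mul]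
      have hXpΘ : Xp * (Xs * P) = (Xp * Xs) * P := (Matrix.mul_assoc _ _ _).symm
      have hPsym : Pᵀ = P := by
        rw [← conjTranspose_eq_transpose_of_trivial, hP.isHermitian.eq]
      have hdet : IsUnit P.det := (Matrix.isUnit_iff_isUnit_det _).mp hP.isUnit
      have hlow : (Xs * P)ᵀ * Xpᵀ = ((Xp * Xs) * P)ᵀ := by
        rw [← transpose_mul, hXpΘ]
      rw [hXmΘ, hXpΘ, hlow]
      rw [aux_schur P ((Xp * Xs) * P) hP]
      have : Xp * Xs * P * P⁻¹ * (Xp * Xs * P)ᵀ = (Xp * Xs) * P * (Xp * Xs)ᵀ := by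
        rw [Matrix.mul_assoc (Xp * Xs) P P⁻¹, Matrix.mul_nonsing_inv _ hdet,
          Matrix.mul_one, transpose_mul, hPsym, ← Matrix.mul_assoc]
      rw [this]
      exact hLyap
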